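/- Let G_i and G_j be two graphs on a common vertex set containing s and t, with (s,t) an edge of neither, such that no s–t cut vertex of G_j lies in G_i and no s–t cut vertex of G_i lies in G_j, the sets of s–t cut vertices X_i and X_j are disjoint, X_i and X_j are both nonempty, d_i(s,t) ≤ 4 and d_j(s,t) ≤ 4. If d_i(s,t) = 2, then there exist an s–t path in G_i and an s–t path in G_j (each of length ≤ 4) that are internally disjoint. -/
import Mathlib


open SimpleGraph

/-- The internal vertices of a walk from `s` to `t`. -/
def SimpleGraph.Walk.internals {V : Type*} {G : SimpleGraph V} {s t : V}
    (p : G.Walk s t) : Set V :=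
  {v | v ∈ p.support ∧ v ≠ s ∧ v ≠ t}

/-- The set of `s`–`t` cut vertices of `G`: vertices other than `s,t` whose removal
disconnects `s` from `t`, equivalently (for reachable `s,t`) vertices lying on every
`s`–`t` walk. -/
def cutSet {V : Type*} (G : SimpleGraph V) (s t : V) : Set V :=
  {v | v ≠ s ∧ v ≠ t ∧ ∀ p : G.Walk s t, v ∈ p.support}

/-- in the setting of procedure `Test` — `(s,t)` an edge of neither graph,
the (nonempty, disjoint) cut sets `X_i`, `X_j` mutually deleted (i.e. isolated in the other
graph), both distances at most 4 — if `d_i(s,t) = 2` then there are internally disjoint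
`s`–`t` paths of length at most 4, one in `G_i` and one in `G_j`. -/

lemma exists_adj_of_mem_support {V : Type*} {G : SimpleGraph V} {s t v : V}
    (p : G.Walk s t) (hv : v ∈ p.support) (hvs : v ≠ s) : ∃ u, G.Adj v u := by
  induction p with
  | nil => simp at hv; exact absurd hv hvs
  | cons h q ih =>
    rename_i a b c
    rw [SimpleGraph.Walk.support_cons, List.mem_cons] at hv
    rcases hv with rfl | hv
    · exact absurd rfl hvs
    · by_cases hb : v = b
      · subst hb; exact ⟨a, h.symm⟩
      · exact ih hv hb

theorem stmt10 {V : Type*} (Gi Gj : SimpleGraph V) (s t : V) (hne : s ≠ t)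
    (hadji : ¬ Gi.Adj s t) (hadjj : ¬ Gj.Adj s t)
    (hri : Gi.Reachable s t) (hrj : Gj.Reachable s t)
    (habsj : ∀ v ∈ cutSet Gj s t, ∀ u, ¬ Gi.Adj v u)
    (habsi : ∀ v ∈ cutSet Gi s t, ∀ u, ¬ Gj.Adj v u)
    (hdisj : cutSet Gi s t ∩ cutSet Gj s t = ∅)
    (hnei : (cutSet Gi s t).Nonempty) (hnej : (cutSet Gj s t).Nonempty)
    (hdi : Gi.dist s t ≤ 4) (hdj : Gj.dist s t ≤ 4)
    (hdi2 : Gi.dist s t = 2) :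
    ∃ (Pi : Gi.Walk s t) (Pj : Gj.Walk s t), Pi.IsPath ∧ Pj.IsPath ∧
      Pi.length ≤ 4 ∧ Pj.length ≤ 4 ∧ Disjoint Pi.internals Pj.internals := by

  obtain ⟨x, hxs, hxt, hxall⟩ := hnei
  obtain ⟨p, hp, hplen⟩ := hri.exists_path_of_dist
  rw [hdi2] at hplen
  -- destructure p of length 2
  have hmem := hxall p
  obtain ⟨hsa, q, rfl⟩ : ∃ (hsa : Gi.Adj s x) (q : Gi.Walk x t), p = SimpleGraph.Walk.cons hsa q := by
    cases p with
    | nil => simp at hplen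
    | cons h q =>
      rename_i b
      have hb : b = x := by
        cases q with
        | nil => simp at hplen
        | cons h' q' =>
          rename_i c
          cases q' with
          | nil =>
            simp [SimpleGraph.Walk.support_cons] at hmem
            rcases hmem with rfl | rfl | rfl
            · exact absurd rfl hxs
            · rfl
            · exact absurd rfl hxt
          | cons h'' q'' => simp [SimpleGraph.Walk.length_cons] at hplen
      subst hb
      exact ⟨h, q, rfl⟩
  have hxtadj : Gi.Adj x t := by
    cases q with
    | nil => simp at hplen
    | cons h' q' =>
      cases q' with
      | nil => exact h'
      | cons h'' q'' => simp [SimpleGraph.Walk.length_cons] at hplen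
  clear hp hplen hmem
  obtain ⟨pj, hpj, hpjlen⟩ := hrj.exists_path_of_dist
  refine ⟨SimpleGraph.Walk.cons hsa ((SimpleGraph.Walk.cons hxtadj SimpleGraph.Walk.nil)), pj,
    ?_, hpj, by simp, by omega, ?_⟩
  · apply SimpleGraph.Walk.IsPath.cons
    · apply SimpleGraph.Walk.IsPath.cons (SimpleGraph.Walk.IsPath.nil)
      simp [hxt]
    · simp [hxs.symm, hne]
  · rw [Set.disjoint_left]
    rintro v ⟨hvsup, hvs, hvt⟩ ⟨hvsup', -, -⟩
    simp [SimpleGraph.Walk.internals, SimpleGraph.Walk.support_cons] at hvsup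
    rcases hvsup with rfl | rfl | rfl
    · exact hvs rfl
    · obtain ⟨u, hu⟩ := exists_adj_of_mem_support pj hvsup' hvs
      exact habsi v ⟨hxs, hxt, hxall⟩ u hu
    · exact hvt rfl
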